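/- Let n ≥ 1 and let A, C be real n×n matrices such that every eigenvalue μ ∈ ℂ of A (as a complex matrix) satisfies Re μ < 0, and Cᵀ = −C. Then the matrix-valued function s ↦ e^{s·Aᵀ} C e^{s·A} is Bochner integrable on [0, ∞), and the matrix C_A := ∫₀^∞ e^{s·Aᵀ} C e^{s·A} ds satisfies the Lyapunov identity Aᵀ·C_A + C_A·A = −C. -/

import Mathlib

open Matrix

section Aux

open Polynomial NormedSpace Module

attribute [local instance] Matrix.linftyOpSemiNormedRing Matrix.linftyOpNormedRing
  Matrix.linftyOpNormedAlgebra

lemma my_charpoly_transpose {R : Type*} [CommRing R] {n : ℕ} (M : Matrix (Fin n) (Fin n) R) :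
    Mᵀ.charpoly = M.charpoly := by
  rw [Matrix.charpoly, Matrix.charpoly, ← Matrix.det_transpose (charmatrix Mᵀ)]
  congr 1
  ext i j
  rcases eq_or_ne i j with rfl | h
  · simp [charmatrix_apply_eq]
  · simp [charmatrix_apply_ne _ _ _ h, charmatrix_apply_ne _ _ _ h.symm]

lemma isRoot_charpoly_of_eig {n : ℕ} (B : Matrix (Fin n) (Fin n) ℂ) (μ : ℂ) (v : Fin n → ℂ)
    (hv : v ≠ 0) (h : B *ᵥ v = μ • v) : B.charpoly.IsRoot μ := by
  have hdet : (Matrix.scalar (Fin n) μ - B).det = 0 := by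
    rw [← Matrix.exists_mulVec_eq_zero_iff]
    refine ⟨v, hv, ?_⟩
    rw [Matrix.sub_mulVec, h]
    have : Matrix.scalar (Fin n) μ = μ • (1 : Matrix (Fin n) (Fin n) ℂ) := by
      ext i j
      rcases eq_or_ne i j with rfl | hij
      · simp [Matrix.scalar_apply, Matrix.one_apply_eq]
      · simp [Matrix.scalar_apply, Matrix.diagonal_apply_ne _ hij, Matrix.one_apply_ne hij]
    rw [this, Matrix.smul_mulVec, Matrix.one_mulVec, sub_self]
  have hev : B.charpoly.eval μ = (Matrix.scalar (Fin n) μ - B).det := by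
    have := (Polynomial.evalRingHom μ).map_det B.charmatrix
    rw [Matrix.charpoly]
    rw [show (B.charmatrix.det.eval μ) = (Polynomial.evalRingHom μ) B.charmatrix.det from rfl,
      this]
    congr 1
    ext i j
    rcases eq_or_ne i j with rfl | hij
    · simp [charmatrix_apply_eq, Matrix.scalar_apply, Matrix.diagonal_apply_eq]
    · simp [charmatrix_apply_ne _ _ _ hij, Matrix.scalar_apply,
        Matrix.diagonal_apply_ne _ hij]
  simpa [Polynomial.IsRoot, hev] using hdet

lemma exp_entry_decay {n : ℕ} (hn : 1 ≤ n) (B : Matrix (Fin n) (Fin n) ℂ)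
    (hB : ∀ μ : ℂ, B.charpoly.IsRoot μ → μ.re < 0) :
    ∃ δ : ℝ, 0 < δ ∧ ∀ i j : Fin n, ∃ M : ℝ, ∀ s : ℝ, 0 ≤ s →
      ‖exp (s • B) i j‖ ≤ M * Real.exp (-δ * s) := by
  classical
  -- the set of roots
  have hcp0 : B.charpoly ≠ 0 := B.charpoly_monic.ne_zero
  obtain ⟨z, hz⟩ : ∃ z, B.charpoly.IsRoot z := by
    apply Complex.exists_root
    rw [Matrix.charpoly_degree_eq_dim]
    simp only [Fintype.card_fin]
    exact_mod_cast Nat.lt_of_lt_of_le Nat.zero_lt_one hn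
  set roots : Finset ℂ := B.charpoly.roots.toFinset with hroots
  have hne : roots.Nonempty := ⟨z, Multiset.mem_toFinset.mpr ((Polynomial.mem_roots hcp0).mpr hz)⟩
  set δ0 : ℝ := roots.inf' hne fun μ => -μ.re with hδ0def
  have hδ0 : 0 < δ0 := by
    rw [hδ0def, Finset.lt_inf'_iff]
    intro μ hμ
    have : B.charpoly.IsRoot μ := (Polynomial.mem_roots hcp0).mp (Multiset.mem_toFinset.mp hμ)
    linarith [hB μ this]
  set δ : ℝ := δ0 / 2 with hδdef
  have hδ : 0 < δ := by positivity
  refine ⟨δ, hδ, ?_⟩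
  -- the submodule of vectors with decaying orbit
  set fB : Module.End ℂ (Fin n → ℂ) := Matrix.toLinAlgEquiv' B with hfB
  let S : Submodule ℂ (Fin n → ℂ) :=
    { carrier := {v | ∃ M : ℝ, ∀ s : ℝ, 0 ≤ s →
        ‖exp (s • B) *ᵥ v‖ ≤ M * Real.exp (-δ * s)}
      add_mem' := by
        rintro u v ⟨M₁, h₁⟩ ⟨M₂, h₂⟩
        refine ⟨M₁ + M₂, fun s hs => ?_⟩
        rw [Matrix.mulVec_add, add_mul]
        exact (norm_add_le _ _).trans (add_le_add (h₁ s hs) (h₂ s hs))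
      zero_mem' := ⟨0, fun s hs => by simp [Matrix.mulVec_zero]⟩
      smul_mem' := by
        rintro c v ⟨M, h⟩
        refine ⟨‖c‖ * M, fun s hs => ?_⟩
        rw [Matrix.mulVec_smul, norm_smul, mul_assoc]
        exact mul_le_mul_of_nonneg_left (h s hs) (norm_nonneg c) }
  -- every maximal generalized eigenspace is contained in S
  have hgen : ∀ μ : ℂ, fB.maxGenEigenspace μ ≤ S := by
    intro μ v hv
    rcases eq_or_ne v 0 with rfl | hv0
    · exact S.zero_mem
    obtain ⟨k, hk⟩ := (Module.End.mem_maxGenEigenspace _ _ _).mp hv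
    -- μ is a root of the characteristic polynomial
    have hroot : B.charpoly.IsRoot μ := by
      set N : Module.End ℂ (Fin n → ℂ) := fB - μ • 1 with hN
      have hex : ∃ j, (N ^ j) v = 0 := ⟨k, hk⟩
      set j := Nat.find hex with hj
      have hj0 : j ≠ 0 := by
        intro h0
        have := Nat.find_spec hex
        rw [← hj, h0] at this
        simp at this
        exact hv0 this
      set w : Fin n → ℂ := (N ^ (j - 1)) v with hw
      have hw0 : w ≠ 0 := Nat.find_min hex (Nat.sub_lt (Nat.pos_of_ne_zero hj0) Nat.one_pos)
      have hNw : N w = 0 := by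
        have : (N ^ j) v = 0 := Nat.find_spec hex
        rw [← Nat.succ_pred_eq_of_pos (Nat.pos_of_ne_zero hj0), pow_succ'] at this
        simpa [hw] using this
      have hBw : B *ᵥ w = μ • w := by
        have : fB w - μ • w = 0 := by simpa [hN, LinearMap.sub_apply] using hNw
        have h2 : fB w = μ • w := by linear_combination (norm := module) this
        simpa [hfB, Matrix.toLinAlgEquiv'_apply] using h2
      exact isRoot_charpoly_of_eig B μ w hw0 hBw
    have hμroots : μ ∈ roots :=
      Multiset.mem_toFinset.mpr ((Polynomial.mem_roots hcp0).mpr hroot)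
    have hμre : μ.re ≤ -δ0 := by
      have := Finset.inf'_le (fun μ => -μ.re) hμroots
      rw [← hδ0def] at this
      linarith
    -- the expansion of `exp (s • B) *ᵥ v`
    set Nm : Matrix (Fin n) (Fin n) ℂ := B - μ • 1 with hNm
    have hNmpow : ∀ m : ℕ, ((fB - μ • 1) ^ m) v = (Nm ^ m) *ᵥ v := by
      intro m
      have : fB - μ • 1 = Matrix.toLinAlgEquiv' Nm := by
        rw [hNm, map_sub, _root_.map_smul, _root_.map_one, hfB]
      rw [this, ← map_pow, Matrix.toLinAlgEquiv'_apply]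
    have hkm : ∀ m : ℕ, k ≤ m → (Nm ^ m) *ᵥ v = 0 := by
      intro m hm
      rw [← Nat.sub_add_cancel hm, pow_add, ← Matrix.mulVec_mulVec, ← hNmpow, hk,
        Matrix.mulVec_zero]
    refine ⟨∑ m ∈ Finset.range k, δ⁻¹ ^ m * ‖(Nm ^ m) *ᵥ v‖, fun s hs => ?_⟩
    -- rewrite the matrix exponential
    have hsplit : s • B = algebraMap ℂ (Matrix (Fin n) (Fin n) ℂ) ((s : ℂ) * μ) + (s : ℂ) • Nm := by
      ext i j
      simp only [Matrix.smul_apply, Matrix.add_apply, Matrix.algebraMap_matrix_apply, hNm,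
        Matrix.sub_apply, Matrix.smul_apply, Matrix.one_apply, smul_eq_mul, Complex.real_smul,
        mul_ite, mul_zero, Algebra.algebraMap_self, RingHom.id_apply]
      split <;> ring
    have hψ : exp ((s : ℂ) • Nm) *ᵥ v
        = ∑ m ∈ Finset.range k, (((m.factorial : ℂ))⁻¹ * (s : ℂ) ^ m) • ((Nm ^ m) *ᵥ v) := by
      let ψ : Matrix (Fin n) (Fin n) ℂ →ₗ[ℂ] (Fin n → ℂ) :=
        { toFun := fun X => X *ᵥ v
          map_add' := fun X Y => Matrix.add_mulVec X Y v
          map_smul' := fun c X => Matrix.smul_mulVec c X v }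
      have hψc : Continuous ψ := LinearMap.continuous_of_finiteDimensional ψ
      have h2 := ((NormedSpace.expSeries_summable' (𝕂 := ℂ) ((s:ℂ) • Nm)).hasSum.map ψ hψc).tsum_eq
      calc exp ((s : ℂ) • Nm) *ᵥ v
          = ψ (∑' m : ℕ, ((m.factorial : ℂ))⁻¹ • ((s:ℂ) • Nm) ^ m) := by
            rw [NormedSpace.exp_eq_tsum ℂ]
            rfl
        _ = ∑' m : ℕ, ψ (((m.factorial : ℂ))⁻¹ • ((s:ℂ) • Nm) ^ m) := h2.symm
        _ = ∑ m ∈ Finset.range k, ψ (((m.factorial : ℂ))⁻¹ • ((s:ℂ) • Nm) ^ m) := by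
            apply tsum_eq_sum
            intro m hm
            have hkm' := hkm m (le_of_not_gt fun h => hm (Finset.mem_range.mpr h))
            show (((m.factorial : ℂ))⁻¹ • ((s:ℂ) • Nm) ^ m) *ᵥ v = 0
            rw [_root_.smul_pow, Matrix.smul_mulVec, Matrix.smul_mulVec, hkm',
              smul_zero, smul_zero]
        _ = ∑ m ∈ Finset.range k, (((m.factorial : ℂ))⁻¹ * (s : ℂ) ^ m) • ((Nm ^ m) *ᵥ v) := by
            apply Finset.sum_congr rfl
            intro m _
            show (((m.factorial : ℂ))⁻¹ • ((s:ℂ) • Nm) ^ m) *ᵥ v = _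
            rw [_root_.smul_pow, Matrix.smul_mulVec, Matrix.smul_mulVec, smul_smul]
    have hexp : exp (s • B) *ᵥ v
        = Complex.exp ((s : ℂ) * μ) • ∑ m ∈ Finset.range k,
            (((m.factorial : ℂ))⁻¹ * (s : ℂ) ^ m) • ((Nm ^ m) *ᵥ v) := by
      rw [hsplit, Matrix.exp_add_of_commute _ _ (Algebra.commutes ((s:ℂ)*μ) ((s:ℂ) • Nm))]
      erw [← NormedSpace.algebraMap_exp_comm]
      rw [Algebra.algebraMap_eq_smul_one, smul_mul_assoc,
        one_mul, Matrix.smul_mulVec, hψ,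
        show NormedSpace.exp ((s:ℂ)*μ) = Complex.exp ((s:ℂ)*μ) from
          (congrFun Complex.exp_eq_exp_ℂ _).symm]
    -- norm estimates
    have habs : ‖Complex.exp ((s:ℂ)*μ)‖ = Real.exp (s * μ.re) := by
      rw [Complex.norm_exp]
      congr 1
      simp
    have hpow : ∀ m : ℕ, s ^ m ≤ (m.factorial : ℝ) * δ⁻¹ ^ m * Real.exp (δ * s) := by
      intro m
      have hfac : (0:ℝ) < (m.factorial : ℝ) := by exact_mod_cast m.factorial_pos
      have h1 : (δ*s)^m / (m.factorial : ℝ) ≤ Real.exp (δ*s) := by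
        calc (δ*s)^m / (m.factorial : ℝ)
            ≤ ∑ i ∈ Finset.range (m+1), (δ*s)^i / (i.factorial : ℝ) :=
              Finset.single_le_sum (f := fun i => (δ*s)^i / (i.factorial : ℝ))
                (fun i _ => by positivity) (Finset.self_mem_range_succ m)
          _ ≤ Real.exp (δ*s) := Real.sum_le_exp_of_nonneg (by positivity) _
      have h2 : δ^m * s^m ≤ (m.factorial : ℝ) * Real.exp (δ*s) := by
        rw [div_le_iff₀ hfac, mul_pow] at h1
        linarith [h1]
      have hδm : (0:ℝ) < δ ^ m := by positivity
      calc s ^ m = (δ^m * s^m) / δ^m := by field_simp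
        _ ≤ ((m.factorial : ℝ) * Real.exp (δ*s)) / δ^m := by
            gcongr
        _ = (m.factorial : ℝ) * δ⁻¹ ^ m * Real.exp (δ * s) := by
            rw [inv_pow]
            ring
    rw [hexp, norm_smul, habs]
    calc Real.exp (s * μ.re) * ‖∑ m ∈ Finset.range k,
            (((m.factorial : ℂ))⁻¹ * (s : ℂ) ^ m) • ((Nm ^ m) *ᵥ v)‖
        ≤ Real.exp (s * μ.re) * ∑ m ∈ Finset.range k,
            (m.factorial : ℝ)⁻¹ * s ^ m * ‖(Nm ^ m) *ᵥ v‖ := by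
          apply mul_le_mul_of_nonneg_left _ (Real.exp_nonneg _)
          refine (norm_sum_le _ _).trans (Finset.sum_le_sum fun m _ => ?_)
          rw [norm_smul]
          apply mul_le_mul_of_nonneg_right _ (norm_nonneg _)
          rw [norm_mul, norm_inv, norm_pow]
          simp [Complex.norm_of_nonneg hs, abs_of_nonneg hs]
      _ = ∑ m ∈ Finset.range k, Real.exp (s * μ.re) *
            ((m.factorial : ℝ)⁻¹ * s ^ m * ‖(Nm ^ m) *ᵥ v‖) := Finset.mul_sum _ _ _
      _ ≤ ∑ m ∈ Finset.range k, δ⁻¹ ^ m * ‖(Nm ^ m) *ᵥ v‖ * Real.exp (-δ * s) := by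
          apply Finset.sum_le_sum
          intro m _
          have hfac : (0:ℝ) < (m.factorial : ℝ) := by exact_mod_cast m.factorial_pos
          have h1 : Real.exp (s * μ.re) ≤ Real.exp (-(2*δ)*s) := by
            apply Real.exp_le_exp.mpr
            have h3 : μ.re ≤ -(2*δ) := by
              rw [hδdef]
              linarith
            calc s * μ.re ≤ s * (-(2*δ)) := mul_le_mul_of_nonneg_left h3 hs
              _ = -(2*δ)*s := by ring
          calc Real.exp (s * μ.re) * ((m.factorial : ℝ)⁻¹ * s ^ m * ‖(Nm ^ m) *ᵥ v‖)
              ≤ Real.exp (-(2*δ)*s) * ((m.factorial : ℝ)⁻¹ *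
                  ((m.factorial : ℝ) * δ⁻¹ ^ m * Real.exp (δ * s)) * ‖(Nm ^ m) *ᵥ v‖) := by
                gcongr
                exact hpow m
            _ = δ⁻¹ ^ m * ‖(Nm ^ m) *ᵥ v‖ * (Real.exp (-(2*δ)*s) * Real.exp (δ*s)) := by
                field_simp
            _ = δ⁻¹ ^ m * ‖(Nm ^ m) *ᵥ v‖ * Real.exp (-δ * s) := by
                rw [← Real.exp_add]
                ring_nf
      _ = (∑ m ∈ Finset.range k, δ⁻¹ ^ m * ‖(Nm ^ m) *ᵥ v‖) * Real.exp (-δ * s) :=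
          (Finset.sum_mul _ _ _).symm
  -- conclude from the basis vectors
  have htop : (⊤ : Submodule ℂ (Fin n → ℂ)) ≤ S := by
    rw [← Module.End.iSup_maxGenEigenspace_eq_top fB]
    exact iSup_le hgen
  intro i j
  obtain ⟨M, hM⟩ := htop (Submodule.mem_top (x := Pi.single j 1))
  refine ⟨M, fun s hs => ?_⟩
  have h1 : ‖exp (s • B) i j‖ ≤ ‖exp (s • B) *ᵥ Pi.single j 1‖ := by
    have h2 := norm_le_pi_norm (exp (s • B) *ᵥ Pi.single j 1) i
    simpa [Matrix.mulVec_single] using h2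
  exact h1.trans (hM s hs)

lemma exp_real_entry_decay {n : ℕ} (hn : 1 ≤ n) (A : Matrix (Fin n) (Fin n) ℝ)
    (hA : ∀ μ : ℂ, ((A.map Complex.ofReal).charpoly).IsRoot μ → μ.re < 0) :
    ∃ δ : ℝ, 0 < δ ∧ ∀ i j : Fin n, ∃ M : ℝ, ∀ s : ℝ, 0 ≤ s →
      |exp (s • A) i j| ≤ M * Real.exp (-δ * s) := by
  obtain ⟨δ, hδ, h⟩ := exp_entry_decay hn (A.map Complex.ofReal) hA
  refine ⟨δ, hδ, fun i j => ?_⟩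
  obtain ⟨M, hM⟩ := h i j
  refine ⟨M, fun s hs => ?_⟩
  have key : (exp (s • A)).map Complex.ofReal = exp (s • A.map Complex.ofReal) := by
    have hcont : Continuous fun X : Matrix (Fin n) (Fin n) ℝ => X.map Complex.ofReal :=
      Continuous.matrix_map continuous_id Complex.continuous_ofReal
    have h1 := map_exp (Complex.ofRealHom.mapMatrix
      (m := Fin n)) hcont (s • A)
    rw [show (Complex.ofRealHom.mapMatrix (s • A) : Matrix (Fin n) (Fin n) ℂ)
        = s • A.map Complex.ofReal from ?_] at h1
    · exact h1
    · ext i j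
      simp [RingHom.mapMatrix_apply]
  have h2 : (Complex.ofReal (exp (s • A) i j)) = exp (s • A.map Complex.ofReal) i j := by
    rw [← key]; rfl
  have h3 : |exp (s • A) i j| = ‖exp (s • A.map Complex.ofReal) i j‖ := by
    rw [← h2, Complex.norm_real, Real.norm_eq_abs]
  rw [h3]
  exact hM s hs

end Aux

open NormedSpace Polynomial Module in
/-- The Lyapunov identity for the stationary Grassmann Ornstein–Uhlenbeck
covariance: if all complex eigenvalues of `A` have negative real part and `Cᵀ = −C`, then
`s ↦ e^{sAᵀ} C e^{sA}` is integrable on `[0, ∞)` (entrywise, equivalently in the Bochner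
sense) and `C_A := ∫₀^∞ e^{sAᵀ} C e^{sA} ds` satisfies `Aᵀ C_A + C_A A = −C`. -/
theorem stmt_7 {n : ℕ} (hn : 1 ≤ n) (A C : Matrix (Fin n) (Fin n) ℝ)
    (hA : ∀ μ : ℂ, ((A.map Complex.ofReal).charpoly).IsRoot μ → μ.re < 0)
    (hC : Cᵀ = -C) :
    (∀ i j : Fin n, MeasureTheory.IntegrableOn
      (fun s : ℝ => (NormedSpace.exp (s • Aᵀ) * C * NormedSpace.exp (s • A)) i j)
      (Set.Ici 0)) ∧
    Aᵀ * (Matrix.of fun i j : Fin n =>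
        ∫ s in Set.Ici (0 : ℝ), (NormedSpace.exp (s • Aᵀ) * C * NormedSpace.exp (s • A)) i j) +
      (Matrix.of fun i j : Fin n =>
        ∫ s in Set.Ici (0 : ℝ), (NormedSpace.exp (s • Aᵀ) * C * NormedSpace.exp (s • A)) i j) * A
      = -C := by
  classical
  letI : SeminormedRing (Matrix (Fin n) (Fin n) ℝ) := Matrix.linftyOpSemiNormedRing
  letI : NormedRing (Matrix (Fin n) (Fin n) ℝ) := Matrix.linftyOpNormedRing
  letI : NormedAlgebra ℝ (Matrix (Fin n) (Fin n) ℝ) := Matrix.linftyOpNormedAlgebra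
  letI : NormedAlgebra ℚ (Matrix (Fin n) (Fin n) ℝ) := Matrix.linftyOpNormedAlgebra
  obtain ⟨δ₁, hδ₁, h₁⟩ := exp_real_entry_decay hn Aᵀ (by
    intro μ hμ
    apply hA
    rwa [show (Aᵀ).map Complex.ofReal = (A.map Complex.ofReal)ᵀ from Matrix.transpose_map,
      my_charpoly_transpose] at hμ)
  obtain ⟨δ₂, hδ₂, h₂⟩ := exp_real_entry_decay hn A hA
  choose M₁ hM₁ using h₁
  choose M₂ hM₂ using h₂
  set G : ℝ → Matrix (Fin n) (Fin n) ℝ := fun s => exp (s • Aᵀ) * C * exp (s • A) with hG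
  set ε : ℝ := δ₁ + δ₂ with hε
  have hεpos : 0 < ε := by positivity
  -- entrywise continuity
  have hGcont : Continuous G := by
    apply Continuous.mul
    apply Continuous.mul
    · exact (NormedSpace.exp_continuous).comp (continuous_id.smul continuous_const)
    · exact continuous_const
    · exact (NormedSpace.exp_continuous).comp (continuous_id.smul continuous_const)
  have hGe : ∀ i j : Fin n, Continuous fun s => G s i j := fun i j => hGcont.matrix_elem i j
  -- entrywise bound
  have hGbound : ∀ i j : Fin n, ∀ s : ℝ, 0 ≤ s →
      |G s i j| ≤ (∑ k, ∑ l, M₁ i k * |C k l| * M₂ l j) * Real.exp (-ε * s) := by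
    intro i j s hs
    have hentry : G s i j = ∑ k, ∑ l, exp (s • Aᵀ) i k * C k l * exp (s • A) l j := by
      rw [hG]
      simp only [Matrix.mul_apply, Finset.sum_mul]
      rw [Finset.sum_comm]
    rw [hentry, Finset.sum_mul]
    refine (Finset.abs_sum_le_sum_abs _ _).trans (Finset.sum_le_sum fun k _ => ?_)
    rw [Finset.sum_mul]
    refine (Finset.abs_sum_le_sum_abs _ _).trans (Finset.sum_le_sum fun l _ => ?_)
    rw [abs_mul, abs_mul]
    have e1 := hM₁ i k s hs
    have e2 := hM₂ l j s hs
    have h1nn : 0 ≤ M₁ i k * Real.exp (-δ₁ * s) := (abs_nonneg _).trans e1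
    calc |exp (s • Aᵀ) i k| * |C k l| * |exp (s • A) l j|
        ≤ M₁ i k * Real.exp (-δ₁ * s) * |C k l| * (M₂ l j * Real.exp (-δ₂ * s)) :=
          mul_le_mul (mul_le_mul e1 le_rfl (abs_nonneg _) h1nn) e2 (abs_nonneg _)
            (mul_nonneg h1nn (abs_nonneg _))
      _ = M₁ i k * |C k l| * M₂ l j * Real.exp (-ε * s) := by
          rw [show -ε * s = -δ₁ * s + -δ₂ * s by rw [hε]; ring, Real.exp_add]
          ring
  -- integrability of the entries
  have hInt : ∀ i j : Fin n, MeasureTheory.IntegrableOn (fun s => G s i j) (Set.Ici (0:ℝ)) := by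
    intro i j
    rw [integrableOn_Ici_iff_integrableOn_Ioi]
    have hg : MeasureTheory.IntegrableOn
        (fun s => (∑ k, ∑ l, M₁ i k * |C k l| * M₂ l j) * Real.exp (-ε * s)) (Set.Ioi (0:ℝ)) :=
      (exp_neg_integrableOn_Ioi 0 hεpos).const_mul _
    refine MeasureTheory.Integrable.mono' hg ((hGe i j).aestronglyMeasurable.restrict) ?_
    filter_upwards [MeasureTheory.ae_restrict_mem measurableSet_Ioi] with s hs
    rw [Real.norm_eq_abs]
    exact hGbound i j s (le_of_lt hs)
  -- derivative
  have hder : ∀ s : ℝ, HasDerivAt G (Aᵀ * G s + G s * A) s := by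
    intro s
    have d1 : HasDerivAt (fun u : ℝ => exp (u • Aᵀ)) (Aᵀ * exp (s • Aᵀ)) s :=
      hasDerivAt_exp_smul_const' (𝕂 := ℝ) Aᵀ s
    have d2 : HasDerivAt (fun u : ℝ => exp (u • A)) (exp (s • A) * A) s :=
      hasDerivAt_exp_smul_const (𝕂 := ℝ) A s
    have d3 := (d1.mul_const C).mul d2
    convert d3 using 1
    · rfl
    · rfl
    · rfl
    · rfl
    rw [hG]
    simp only [mul_assoc, add_comm]
  have hder_entry : ∀ i j : Fin n, ∀ s : ℝ,
      HasDerivAt (fun u => G u i j) ((Aᵀ * G s + G s * A) i j) s := by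
    intro i j s
    have hlin : IsLinearMap ℝ (fun X : Matrix (Fin n) (Fin n) ℝ => X i j) :=
      ⟨fun X Y => rfl, fun c X => rfl⟩
    let E : Matrix (Fin n) (Fin n) ℝ →L[ℝ] ℝ :=
      LinearMap.toContinuousLinearMap (IsLinearMap.mk' _ hlin)
    exact E.hasFDerivAt.comp_hasDerivAt s (hder s)
  -- integrability of the derivative entries
  have hInt' : ∀ i j : Fin n, MeasureTheory.IntegrableOn
      (fun s => (Aᵀ * G s + G s * A) i j) (Set.Ioi (0:ℝ)) := by
    intro i j
    have e : (fun s => (Aᵀ * G s + G s * A) i j)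
        = fun s => (∑ k, Aᵀ i k * G s k j) + (∑ k, G s i k * A k j) := by
      funext s
      simp [Matrix.add_apply, Matrix.mul_apply]
    rw [e]
    exact (MeasureTheory.integrable_finset_sum _ (fun k _ =>
        ((hInt k j).mono_set Set.Ioi_subset_Ici_self).const_mul _)).add
      (MeasureTheory.integrable_finset_sum _ (fun k _ =>
        ((hInt i k).mono_set Set.Ioi_subset_Ici_self).mul_const _))
  -- limits at infinity
  have hlim : ∀ i j : Fin n, Filter.Tendsto (fun s => G s i j) Filter.atTop (nhds 0) := by
    intro i j
    apply squeeze_zero_norm' (a := fun s => (∑ k, ∑ l, M₁ i k * |C k l| * M₂ l j) * Real.exp (-ε * s))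
    · filter_upwards [Filter.eventually_ge_atTop (0:ℝ)] with s hs
      rw [Real.norm_eq_abs]
      exact hGbound i j s hs
    · have hb : Filter.Tendsto (fun s : ℝ => -ε * s) Filter.atTop Filter.atBot := by
        apply Filter.Tendsto.const_mul_atTop_of_neg (by linarith : -ε < 0) Filter.tendsto_id
      have := (Real.tendsto_exp_atBot.comp hb).const_mul (∑ k, ∑ l, M₁ i k * |C k l| * M₂ l j)
      simpa using this
  -- G at 0
  have hG0 : G 0 = C := by
    rw [hG]
    simp [NormedSpace.exp_zero]
  -- FTC
  have hFTC : ∀ i j : Fin n, ∫ s in Set.Ioi (0:ℝ), (Aᵀ * G s + G s * A) i j = 0 - G 0 i j :=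
    fun i j => MeasureTheory.integral_Ioi_of_hasDerivAt_of_tendsto'
      (fun s _ => hder_entry i j s) (hInt' i j) (hlim i j)
  refine ⟨hInt, ?_⟩
  show Aᵀ * (Matrix.of fun i j : Fin n => ∫ s in Set.Ici (0:ℝ), G s i j) +
      (Matrix.of fun i j : Fin n => ∫ s in Set.Ici (0:ℝ), G s i j) * A = -C
  ext i j
  have e : (fun s => (Aᵀ * G s + G s * A) i j)
      = fun s => (∑ k, Aᵀ i k * G s k j) + (∑ k, G s i k * A k j) := by
    funext s
    simp [Matrix.add_apply, Matrix.mul_apply]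
  have i1 : ∀ k, MeasureTheory.IntegrableOn (fun s => Aᵀ i k * G s k j) (Set.Ioi (0:ℝ)) :=
    fun k => ((hInt k j).mono_set Set.Ioi_subset_Ici_self).const_mul _
  have i2 : ∀ k, MeasureTheory.IntegrableOn (fun s => G s i k * A k j) (Set.Ioi (0:ℝ)) :=
    fun k => ((hInt i k).mono_set Set.Ioi_subset_Ici_self).mul_const _
  have h2 : ∫ s in Set.Ioi (0:ℝ), (Aᵀ * G s + G s * A) i j
      = (∑ k, Aᵀ i k * ∫ s in Set.Ioi (0:ℝ), G s k j)
        + (∑ k, (∫ s in Set.Ioi (0:ℝ), G s i k) * A k j) := by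
    rw [e, MeasureTheory.integral_add
        (MeasureTheory.integrable_finset_sum _ (fun k _ => i1 k))
        (MeasureTheory.integrable_finset_sum _ (fun k _ => i2 k)),
      MeasureTheory.integral_finset_sum _ (fun k _ => i1 k),
      MeasureTheory.integral_finset_sum _ (fun k _ => i2 k)]
    congr 1
    · exact Finset.sum_congr rfl fun k _ => MeasureTheory.integral_const_mul _ _
    · exact Finset.sum_congr rfl fun k _ => MeasureTheory.integral_mul_const _ _
  have h3 := (hFTC i j).symm.trans h2
  rw [hG0] at h3
  simp only [Matrix.add_apply, Matrix.mul_apply, Matrix.of_apply, Matrix.neg_apply]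
  simp_rw [MeasureTheory.integral_Ici_eq_integral_Ioi]
  linarith [h3]
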